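/- Let P be a poset. If for all p, q in P with p ≰ q there exists an ω-filter Γ of P with p ∈ Γ and q ∉ Γ, then P is representable: the map h : P → 𝒫(F), where F is the set of ω-filters of P and h(a) = {Γ ∈ F : a ∈ Γ}, is an order embedding preserving all existing finite meets and joins. -/
import Mathlib


/-- An ω-filter of a poset: upward closed, closed under existing finite meets,
and prime for existing finite joins. -/
def IsOmegaFilter {P : Type*} [PartialOrder P] (Γ : Set P) : Prop :=
  (∀ a b : P, a ∈ Γ → a ≤ b → b ∈ Γ) ∧
  (∀ (S : Finset P) (m : P), ↑S ⊆ Γ → IsGLB (S : Set P) m → m ∈ Γ) ∧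
  (∀ (S : Finset P) (j : P), IsLUB (S : Set P) j → j ∈ Γ → ∃ s ∈ S, s ∈ Γ)

/-- If ω-filters separate `p ≰ q`, then `a ↦ {Γ : ω-filter | a ∈ Γ}` is an order
embedding into the powerset of the set of ω-filters, preserving all existing
finite meets (as intersections) and finite joins (as unions). -/
theorem representable_of_omegaFilter_separation {P : Type*} [PartialOrder P]
    (hsep : ∀ p q : P, ¬ p ≤ q → ∃ Γ : Set P, IsOmegaFilter Γ ∧ p ∈ Γ ∧ q ∉ Γ) :
    (∀ a b : P, a ≤ b ↔
        {Γ : {Γ : Set P // IsOmegaFilter Γ} | a ∈ Γ.1} ⊆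
        {Γ : {Γ : Set P // IsOmegaFilter Γ} | b ∈ Γ.1}) ∧
    (∀ (S : Finset P) (m : P), IsGLB (S : Set P) m →
        {Γ : {Γ : Set P // IsOmegaFilter Γ} | m ∈ Γ.1} =
        ⋂ s ∈ S, {Γ : {Γ : Set P // IsOmegaFilter Γ} | s ∈ Γ.1}) ∧
    (∀ (S : Finset P) (j : P), IsLUB (S : Set P) j →
        {Γ : {Γ : Set P // IsOmegaFilter Γ} | j ∈ Γ.1} =
        ⋃ s ∈ S, {Γ : {Γ : Set P // IsOmegaFilter Γ} | s ∈ Γ.1}) := by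
  refine ⟨fun a b => ⟨fun hab Γ ha => Γ.2.1 a b ha hab, fun h => ?_⟩,
    fun S m hm => ?_, fun S j hj => ?_⟩
  · by_contra hab
    obtain ⟨Γ, hΓ, hp, hq⟩ := hsep a b hab
    exact hq (@h ⟨Γ, hΓ⟩ hp)
  · ext Γ
    simp only [Set.mem_setOf_eq, Set.mem_iInter]
    constructor
    · intro hmΓ s hs
      exact Γ.2.1 m s hmΓ (hm.1 hs)
    · intro h
      exact Γ.2.2.1 S m (fun s hs => h s hs) hm
  · ext Γ
    simp only [Set.mem_setOf_eq, Set.mem_iUnion]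
    constructor
    · intro hjΓ
      obtain ⟨s, hs, hsΓ⟩ := Γ.2.2.2 S j hj hjΓ
      exact ⟨s, hs, hsΓ⟩
    · rintro ⟨s, hs, hsΓ⟩
      exact Γ.2.1 s j hsΓ (hj.1 hs)
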